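/- Let Z be a T²_{i,j}-normalized 3-tail of C with C_i ∪ C_j ∪ C_1 ⊆ Z^c, and let W be a Z-terminal tail in T³_{i,j} contained in Z^c with #(Term_Z ∩ Term_W) = 2. Then Z ∪ W is a 2-tail containing v_i, v_j and omitting v_1, and consequently there exists a Z-terminal tail W' ∈ T²_{i,j} with Z ⊆ W'. -/

import Mathlib

open Set

/- Dual multigraph model of a nodal curve: vertices `V` are irreducible
components, edges `E` are nodes, with endpoint maps `s t : E → V`. -/

/-- The set of terminal points (edges of the cut) of a vertex subset `Z`. -/
def TermPts {V E : Type} (s t : E → V) (Z : Set V) : Set E :=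
  {e | (s e ∈ Z ∧ t e ∉ Z) ∨ (t e ∈ Z ∧ s e ∉ Z)}

/-- A subcurve is a nonempty proper subset of the components. -/
def Subcurve {V : Type} (Z : Set V) : Prop := Z.Nonempty ∧ Z ≠ Set.univ

/-- Connectivity of the induced sub-multigraph on `Z`. -/
def ConnOn {V E : Type} (s t : E → V) (Z : Set V) : Prop :=
  ∀ x ∈ Z, ∀ y ∈ Z,
    Relation.ReflTransGen
      (fun a b => a ∈ Z ∧ b ∈ Z ∧ ∃ e, (s e = a ∧ t e = b) ∨ (s e = b ∧ t e = a)) x y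

/-- A tail is a subcurve with both sides connected. -/
def IsTail {V E : Type} (s t : E → V) (Z : Set V) : Prop :=
  Subcurve Z ∧ ConnOn s t Z ∧ ConnOn s t Zᶜ

/-- `k_Z`, the number of terminal points of `Z`. -/
noncomputable def kcut {V E : Type} (s t : E → V) (Z : Set V) : ℕ :=
  (TermPts s t Z).ncard

/-- The pair `(Z, Z')` is free if the edge cuts are disjoint. -/
def FreePair {V E : Type} (s t : E → V) (Z Z' : Set V) : Prop :=
  TermPts s t Z ∩ TermPts s t Z' = ∅

/-- The pair `(Z, Z')` is perfect. -/
def PerfectPair {V : Type} (Z Z' : Set V) : Prop :=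
  Z ⊆ Z' ∨ Z' ⊆ Z ∨ Zᶜ ⊆ Z' ∨ Z' ⊆ Zᶜ
/-- `S²_{i,j}`: the 2-tails containing `vi, vj` and omitting `v1`. -/
def S2set {V E : Type} (s t : E → V) (v1 vi vj : V) : Set (Set V) :=
  {Z | IsTail s t Z ∧ kcut s t Z = 2 ∧ vi ∈ Z ∧ vj ∈ Z ∧ v1 ∉ Z}

/-- The levels of the inductive construction of the set of nested tails:
level `0` is `S` itself, and level `m+1` consists of the members `Z` of `S`
with `W_m ◁ Z`, where `W_m` is the intersection of the members of level `m`. -/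
def Tlevel {V E : Type} (s t : E → V) (S : Set (Set V)) : ℕ → Set (Set V)
  | 0 => S
  | (m + 1) =>
      {Z | Z ∈ S ∧ ⋂₀ Tlevel s t S m ⊂ Z ∧ FreePair s t (⋂₀ Tlevel s t S m) Z}

/-- The set of nested tails extracted from `S`: the tails `W_m = ⋂ (level m)`
for all `m` with level `m` nonempty. -/
def Tset {V E : Type} (s t : E → V) (S : Set (Set V)) : Set (Set V) :=
  {X | ∃ m, (Tlevel s t S m).Nonempty ∧ X = ⋂₀ Tlevel s t S m}

/-- `T²_{i,j}`, the set of nested 2-tails with respect to `(i, j)`. -/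
def T2set {V E : Type} (s t : E → V) (v1 vi vj : V) : Set (Set V) :=
  Tset s t (S2set s t v1 vi vj)

/-- `S³_{i,j}`: the `T²_{i,j}`-free 3-tails containing `vi, vj`, omitting `v1`. -/
def S3set {V E : Type} (s t : E → V) (v1 vi vj : V) : Set (Set V) :=
  {Z | IsTail s t Z ∧ kcut s t Z = 3 ∧ vi ∈ Z ∧ vj ∈ Z ∧ v1 ∉ Z ∧
        ∀ W ∈ T2set s t v1 vi vj, FreePair s t Z W}

/-- `T³_{i,j}`, the set of nested 3-tails with respect to `(i, j)`. -/
def T3set {V E : Type} (s t : E → V) (v1 vi vj : V) : Set (Set V) :=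
  Tset s t (S3set s t v1 vi vj)

/-- `Z` is `T²_{i,j}`-normalized: every `Z`-terminal member of `T²_{i,j}`
forms a perfect pair with `Z`. -/
def T2Normalized {V E : Type} (s t : E → V) (v1 vi vj : V) (Z : Set V) : Prop :=
  ∀ W ∈ T2set s t v1 vi vj,
    TermPts s t W ∩ TermPts s t Z ≠ ∅ → PerfectPair Z W


section Aux

variable {V E : Type} {s t : E → V}

/-- Edges with one endpoint in `X` and the other in `Y`. -/
def Ecut (s t : E → V) (X Y : Set V) : Set E :=
  {e | (s e ∈ X ∧ t e ∈ Y) ∨ (s e ∈ Y ∧ t e ∈ X)}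

lemma ncard_u2 [Fintype E] {X Y : Set E} (h : X ∩ Y = ∅) :
    (X ∪ Y).ncard = X.ncard + Y.ncard :=
  Set.ncard_union_eq (Set.disjoint_iff_inter_eq_empty.2 h) (Set.toFinite _) (Set.toFinite _)

lemma subsingleton_of_ncard_le_one [Fintype E] {X : Set E} (h : X.ncard ≤ 1) :
    X.Subsingleton := fun x hx y hy => (Set.ncard_le_one_iff (Set.toFinite _)).1 h hx hy

lemma term_compl (Z : Set V) : TermPts s t Zᶜ = TermPts s t Z := by
  ext e; simp [TermPts]; tauto

lemma term_inter_subset (A B : Set V) :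
    TermPts s t (A ∩ B) ⊆ TermPts s t A ∪ TermPts s t B := by
  intro e; simp [TermPts]; tauto

lemma term_union_subset (A B : Set V) :
    TermPts s t (A ∪ B) ⊆ TermPts s t A ∪ TermPts s t B := by
  intro e; simp [TermPts]; tauto

lemma rel_symm {A : Set V} :
    Symmetric (fun a b => a ∈ A ∧ b ∈ A ∧ ∃ e, (s e = a ∧ t e = b) ∨ (s e = b ∧ t e = a)) := by
  rintro a b ⟨h1, h2, e, he⟩; exact ⟨h2, h1, e, he.symm⟩

lemma rel_mono {A B : Set V} (hAB : A ⊆ B) {x y : V}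
    (h : Relation.ReflTransGen
      (fun a b => a ∈ A ∧ b ∈ A ∧ ∃ e, (s e = a ∧ t e = b) ∨ (s e = b ∧ t e = a)) x y) :
    Relation.ReflTransGen
      (fun a b => a ∈ B ∧ b ∈ B ∧ ∃ e, (s e = a ∧ t e = b) ∨ (s e = b ∧ t e = a)) x y :=
  Relation.ReflTransGen.mono
    (r := fun a b => a ∈ A ∧ b ∈ A ∧ ∃ e, (s e = a ∧ t e = b) ∨ (s e = b ∧ t e = a))
    (p := fun a b => a ∈ B ∧ b ∈ B ∧ ∃ e, (s e = a ∧ t e = b) ∨ (s e = b ∧ t e = a))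
    (fun a b ⟨h1, h2, h3⟩ => ⟨hAB h1, hAB h2, h3⟩) x y h

/-- If there is no edge between `P` and `Y \ P`, then a walk in `Y` starting in `P`
stays in `P`. -/
lemma reach_stay {Y P : Set V} (hP : Ecut s t P (Y \ P) = ∅) {x y : V}
    (h : Relation.ReflTransGen
      (fun a b => a ∈ Y ∧ b ∈ Y ∧ ∃ e, (s e = a ∧ t e = b) ∨ (s e = b ∧ t e = a)) x y)
    (hx : x ∈ P) : y ∈ P := by
  induction h with
  | refl => exact hx
  | @tail b c hab hbc ih =>
    obtain ⟨hbY, hcY, e, he⟩ := hbc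
    by_contra hc
    have hmem : e ∈ Ecut s t P (Y \ P) := by
      rcases he with ⟨hsb, htc⟩ | ⟨hsc, htb⟩
      · exact Or.inl ⟨by rw [hsb]; exact ih, by rw [htc]; exact ⟨hcY, hc⟩⟩
      · exact Or.inr ⟨by rw [hsc]; exact ⟨hcY, hc⟩, by rw [htb]; exact ih⟩
    rw [hP] at hmem
    exact hmem

lemma cross_nonempty {Y P : Set V} (hY : ConnOn s t Y) {x y : V}
    (hxY : x ∈ Y) (hx : x ∈ P) (hyY : y ∈ Y) (hy : y ∉ P) :
    (Ecut s t P (Y \ P)).Nonempty := by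
  rw [Set.nonempty_iff_ne_empty]
  intro h
  exact hy (reach_stay h (hY x hxY y hyY) hx)

lemma conn_of_cross_pt {Y P : Set V} {v0 : V} (hY : ConnOn s t Y) (hPY : P ⊆ Y)
    (hv0 : v0 ∈ P) (hb : ∀ e ∈ Ecut s t P (Y \ P), s e = v0 ∨ t e = v0) :
    ConnOn s t P := by
  set r := fun a b => a ∈ P ∧ b ∈ P ∧ ∃ e, (s e = a ∧ t e = b) ∨ (s e = b ∧ t e = a) with hr
  have key : ∀ y ∈ P, Relation.ReflTransGen r v0 y := by
    intro y hy
    set P' := {v | v ∈ P ∧ Relation.ReflTransGen r v0 v} with hP'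
    have hsub : P \ P' ⊆ Y := fun z hz => hPY hz.1
    have hQ : Ecut s t (Y \ (P \ P')) (Y \ (Y \ (P \ P'))) = ∅ := by
      have hYY : Y \ (Y \ (P \ P')) = P \ P' := by
        ext z; constructor
        · rintro ⟨hzY, hz⟩; by_contra h'; exact hz ⟨hzY, h'⟩
        · intro hz; exact ⟨hsub hz, fun h' => h'.2 hz⟩
      rw [hYY]
      rw [Set.eq_empty_iff_forall_notMem]
      intro e he
      have main : ∀ a c : V, ((s e = a ∧ t e = c) ∨ (s e = c ∧ t e = a)) →
          a ∈ Y \ (P \ P') → c ∈ P \ P' → False := by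
        intro a c hac ha hc
        by_cases haP : a ∈ P
        · have haP' : a ∈ P' := by
            by_contra h'; exact ha.2 ⟨haP, h'⟩
          have hrac : r a c := ⟨haP, hc.1, e, hac⟩
          exact hc.2 ⟨hc.1, haP'.2.tail hrac⟩
        · have hecross : e ∈ Ecut s t P (Y \ P) := by
            rcases hac with ⟨h1, h2⟩ | ⟨h1, h2⟩
            · exact Or.inr ⟨by rw [h1]; exact ⟨ha.1, haP⟩, by rw [h2]; exact hc.1⟩
            · exact Or.inl ⟨by rw [h1]; exact hc.1, by rw [h2]; exact ⟨ha.1, haP⟩⟩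
          rcases hb e hecross with hv | hv <;> rcases hac with ⟨h1, h2⟩ | ⟨h1, h2⟩
          · exact haP (by rw [← h1, hv]; exact hv0)
          · exact hc.2 ⟨hc.1, by rw [← h1, hv]⟩
          · exact hc.2 ⟨hc.1, by rw [← h2, hv]⟩
          · exact haP (by rw [← h2, hv]; exact hv0)
      rcases he with ⟨h1, h2⟩ | ⟨h1, h2⟩
      · exact main (s e) (t e) (Or.inl ⟨rfl, rfl⟩) h1 h2
      · exact main (t e) (s e) (Or.inr ⟨rfl, rfl⟩) h2 h1
    have hv0' : v0 ∈ Y \ (P \ P') :=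
      ⟨hPY hv0, fun h => h.2 ⟨hv0, Relation.ReflTransGen.refl⟩⟩
    have := reach_stay hQ (hY v0 (hPY hv0) y (hPY hy)) hv0'
    by_contra h'
    exact this.2 ⟨hy, fun hyP' => h' hyP'.2⟩
  intro x hx y hy
  exact (((@Relation.ReflTransGen.stdSymm _ _ ⟨fun _ _ h => rel_symm h⟩).symm _ _) (key x hx)).trans (key y hy)

lemma conn_of_cross_subsingleton [Fintype E] {Y P : Set V} (hY : ConnOn s t Y)
    (hPY : P ⊆ Y) (hne : P.Nonempty) (hss : (Ecut s t P (Y \ P)).Subsingleton) :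
    ConnOn s t P := by
  rcases Set.eq_empty_or_nonempty (Ecut s t P (Y \ P)) with hemp | ⟨e0, he0⟩
  · obtain ⟨x0, hx0⟩ := hne
    exact conn_of_cross_pt hY hPY hx0 (fun e he => by rw [hemp] at he; exact he.elim)
  · have hP0 : (s e0 ∈ P ∧ s e0 = s e0) ∨ (t e0 ∈ P ∧ t e0 = t e0) := by
      rcases he0 with ⟨h1, _⟩ | ⟨_, h2⟩
      · exact Or.inl ⟨h1, rfl⟩
      · exact Or.inr ⟨h2, rfl⟩
    rcases hP0 with ⟨hmem, _⟩ | ⟨hmem, _⟩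
    · exact conn_of_cross_pt hY hPY hmem
        (fun e he => by rw [hss he he0]; exact Or.inl rfl)
    · exact conn_of_cross_pt hY hPY hmem
        (fun e he => by rw [hss he he0]; exact Or.inr rfl)

lemma conn_union_overlap {A B : Set V} (hA : ConnOn s t A) (hB : ConnOn s t B)
    (hab : (A ∩ B).Nonempty) : ConnOn s t (A ∪ B) := by
  obtain ⟨c, hcA, hcB⟩ := hab
  have hto : ∀ x ∈ A ∪ B, Relation.ReflTransGen
      (fun a b => a ∈ A ∪ B ∧ b ∈ A ∪ B ∧ ∃ e, (s e = a ∧ t e = b) ∨ (s e = b ∧ t e = a)) x c := by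
    rintro x (hx | hx)
    · exact rel_mono Set.subset_union_left (hA x hx c hcA)
    · exact rel_mono Set.subset_union_right (hB x hx c hcB)
  intro x hx y hy
  exact (hto x hx).trans (((@Relation.ReflTransGen.stdSymm _ _ ⟨fun _ _ h => rel_symm h⟩).symm _ _) (hto y hy))

lemma conn_union_bridge {A B : Set V} {a b : V} {e : E} (hA : ConnOn s t A)
    (hB : ConnOn s t B) (ha : a ∈ A) (hb : b ∈ B)
    (he : (s e = a ∧ t e = b) ∨ (s e = b ∧ t e = a)) : ConnOn s t (A ∪ B) := by
  have hstep : Relation.ReflTransGen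
      (fun x y => x ∈ A ∪ B ∧ y ∈ A ∪ B ∧ ∃ e, (s e = x ∧ t e = y) ∨ (s e = y ∧ t e = x)) a b :=
    Relation.ReflTransGen.single ⟨Or.inl ha, Or.inr hb, e, he⟩
  have hto : ∀ x ∈ A ∪ B, Relation.ReflTransGen
      (fun x y => x ∈ A ∪ B ∧ y ∈ A ∪ B ∧ ∃ e, (s e = x ∧ t e = y) ∨ (s e = y ∧ t e = x)) x b := by
    rintro x (hx | hx)
    · exact (rel_mono Set.subset_union_left (hA x hx a ha)).trans hstep
    · exact rel_mono Set.subset_union_right (hB x hx b hb)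
  intro x hx y hy
  exact (hto x hx).trans (((@Relation.ReflTransGen.stdSymm _ _ ⟨fun _ _ h => rel_symm h⟩).symm _ _) (hto y hy))

lemma Tlevel_subset (s t : E → V) (S : Set (Set V)) : ∀ m, Tlevel s t S m ⊆ S := by
  intro m
  cases m with
  | zero => exact fun Z hZ => hZ
  | succ m => exact fun Z hZ => hZ.1

lemma sInter_closed {P : Set V → Prop} (hP : ∀ A B, P A → P B → P (A ∩ B))
    {F : Set (Set V)} (hF : F.Finite) (hne : F.Nonempty) (hsub : ∀ Y ∈ F, P Y) :
    P (⋂₀ F) := by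
  have H : F.Nonempty → (∀ Y ∈ F, P Y) → P (⋂₀ F) := by
    refine Set.Finite.induction_on
      (motive := fun F _ => F.Nonempty → (∀ Y ∈ F, P Y) → P (⋂₀ F)) F hF ?_ ?_
    · intro h _; exact absurd h (by simp)
    · intro A F' hAF' hF' ih hne hsub
      rcases Set.eq_empty_or_nonempty F' with rfl | hne'
      · simpa using hsub A (by simp)
      · rw [Set.sInter_insert]
        exact hP _ _ (hsub A (Set.mem_insert _ _))
          (ih hne' fun Y hY => hsub Y (Set.mem_insert_of_mem _ hY))
  exact H hne hsub

end Aux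

section Aux2

variable {V E : Type} [Fintype V] [Fintype E] {s t : E → V} {v1 vi vj : V}

set_option maxHeartbeats 1000000 in
lemma S2_inter {A B : Set V} (hA : A ∈ S2set s t v1 vi vj) (hB : B ∈ S2set s t v1 vi vj) :
    A ∩ B ∈ S2set s t v1 vi vj := by
  have hA' : IsTail s t A ∧ kcut s t A = 2 ∧ vi ∈ A ∧ vj ∈ A ∧ v1 ∉ A := hA
  have hB' : IsTail s t B ∧ kcut s t B = 2 ∧ vi ∈ B ∧ vj ∈ B ∧ v1 ∉ B := hB
  obtain ⟨⟨⟨hAne, hAuniv⟩, hAco, hAcc⟩, hkA, hiA, hjA, h1A⟩ := hA'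
  obtain ⟨⟨⟨hBne, hBuniv⟩, hBco, hBcc⟩, hkB, hiB, hjB, h1B⟩ := hB'
  by_cases hab : A ⊆ B
  · rwa [Set.inter_eq_left.mpr hab]
  by_cases hba : B ⊆ A
  · rwa [Set.inter_eq_right.mpr hba]
  obtain ⟨x2, hx2A, hx2B⟩ := Set.not_subset.mp hab
  obtain ⟨x3, hx3B, hx3A⟩ := Set.not_subset.mp hba
  -- region identities
  have hdAI : A \ (A ∩ B) = A \ B := by ext x; simp; try tauto
  have hdBI : B \ (A ∩ B) = B \ A := by ext x; simp; try tauto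
  have hdAc : Aᶜ \ (B \ A) = Aᶜ ∩ Bᶜ := by ext x; simp; try tauto
  have hdBc : Bᶜ \ (A \ B) = Aᶜ ∩ Bᶜ := by ext x; simp; try tauto
  -- nonemptiness of the four boundary cuts
  have hE12ne : (Ecut s t (A ∩ B) (A \ B)).Nonempty := by
    have h := cross_nonempty (P := A ∩ B) hAco hiA ⟨hiA, hiB⟩ hx2A (fun h => hx2B h.2)
    rwa [hdAI] at h
  have hE13ne : (Ecut s t (A ∩ B) (B \ A)).Nonempty := by
    have h := cross_nonempty (P := A ∩ B) hBco hiB ⟨hiA, hiB⟩ hx3B (fun h => hx3A h.1)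
    rwa [hdBI] at h
  have hE34ne : (Ecut s t (B \ A) (Aᶜ ∩ Bᶜ)).Nonempty := by
    have h := cross_nonempty (P := B \ A) hAcc hx3A ⟨hx3B, hx3A⟩ h1A (fun h => h1B h.1)
    rwa [hdAc] at h
  have hE24ne : (Ecut s t (A \ B) (Aᶜ ∩ Bᶜ)).Nonempty := by
    have h := cross_nonempty (P := A \ B) hBcc hx2B ⟨hx2A, hx2B⟩ h1B (fun h => h1A h.1)
    rwa [hdBc] at h
  -- decompositions of the cuts
  have hTA : TermPts s t A = (Ecut s t (A ∩ B) (B \ A) ∪ Ecut s t (A ∩ B) (Aᶜ ∩ Bᶜ)) ∪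
      (Ecut s t (A \ B) (B \ A) ∪ Ecut s t (A \ B) (Aᶜ ∩ Bᶜ)) := by
    ext e; by_cases h1 : s e ∈ A <;> by_cases h2 : s e ∈ B <;> by_cases h3 : t e ∈ A <;> by_cases h4 : t e ∈ B <;> simp [TermPts, Ecut, h1, h2, h3, h4]
  have hTB : TermPts s t B = (Ecut s t (A ∩ B) (A \ B) ∪ Ecut s t (A ∩ B) (Aᶜ ∩ Bᶜ)) ∪
      (Ecut s t (A \ B) (B \ A) ∪ Ecut s t (B \ A) (Aᶜ ∩ Bᶜ)) := by
    ext e; by_cases h1 : s e ∈ A <;> by_cases h2 : s e ∈ B <;> by_cases h3 : t e ∈ A <;> by_cases h4 : t e ∈ B <;> simp [TermPts, Ecut, h1, h2, h3, h4]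
  have hTI : TermPts s t (A ∩ B) = (Ecut s t (A ∩ B) (A \ B) ∪ Ecut s t (A ∩ B) (B \ A)) ∪
      Ecut s t (A ∩ B) (Aᶜ ∩ Bᶜ) := by
    ext e; by_cases h1 : s e ∈ A <;> by_cases h2 : s e ∈ B <;> by_cases h3 : t e ∈ A <;> by_cases h4 : t e ∈ B <;> simp [TermPts, Ecut, h1, h2, h3, h4]
  have dA1 : Ecut s t (A ∩ B) (B \ A) ∩ Ecut s t (A ∩ B) (Aᶜ ∩ Bᶜ) = ∅ := by
    ext e; by_cases h1 : s e ∈ A <;> by_cases h2 : s e ∈ B <;> by_cases h3 : t e ∈ A <;> by_cases h4 : t e ∈ B <;> simp [TermPts, Ecut, h1, h2, h3, h4]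
  have dA2 : Ecut s t (A \ B) (B \ A) ∩ Ecut s t (A \ B) (Aᶜ ∩ Bᶜ) = ∅ := by
    ext e; by_cases h1 : s e ∈ A <;> by_cases h2 : s e ∈ B <;> by_cases h3 : t e ∈ A <;> by_cases h4 : t e ∈ B <;> simp [TermPts, Ecut, h1, h2, h3, h4]
  have dA3 : (Ecut s t (A ∩ B) (B \ A) ∪ Ecut s t (A ∩ B) (Aᶜ ∩ Bᶜ)) ∩
      (Ecut s t (A \ B) (B \ A) ∪ Ecut s t (A \ B) (Aᶜ ∩ Bᶜ)) = ∅ := by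
    ext e; by_cases h1 : s e ∈ A <;> by_cases h2 : s e ∈ B <;> by_cases h3 : t e ∈ A <;> by_cases h4 : t e ∈ B <;> simp [TermPts, Ecut, h1, h2, h3, h4]
  have dB1 : Ecut s t (A ∩ B) (A \ B) ∩ Ecut s t (A ∩ B) (Aᶜ ∩ Bᶜ) = ∅ := by
    ext e; by_cases h1 : s e ∈ A <;> by_cases h2 : s e ∈ B <;> by_cases h3 : t e ∈ A <;> by_cases h4 : t e ∈ B <;> simp [TermPts, Ecut, h1, h2, h3, h4]
  have dB2 : Ecut s t (A \ B) (B \ A) ∩ Ecut s t (B \ A) (Aᶜ ∩ Bᶜ) = ∅ := by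
    ext e; by_cases h1 : s e ∈ A <;> by_cases h2 : s e ∈ B <;> by_cases h3 : t e ∈ A <;> by_cases h4 : t e ∈ B <;> simp [TermPts, Ecut, h1, h2, h3, h4]
  have dB3 : (Ecut s t (A ∩ B) (A \ B) ∪ Ecut s t (A ∩ B) (Aᶜ ∩ Bᶜ)) ∩
      (Ecut s t (A \ B) (B \ A) ∪ Ecut s t (B \ A) (Aᶜ ∩ Bᶜ)) = ∅ := by
    ext e; by_cases h1 : s e ∈ A <;> by_cases h2 : s e ∈ B <;> by_cases h3 : t e ∈ A <;> by_cases h4 : t e ∈ B <;> simp [TermPts, Ecut, h1, h2, h3, h4]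
  have dI1 : Ecut s t (A ∩ B) (A \ B) ∩ Ecut s t (A ∩ B) (B \ A) = ∅ := by
    ext e; by_cases h1 : s e ∈ A <;> by_cases h2 : s e ∈ B <;> by_cases h3 : t e ∈ A <;> by_cases h4 : t e ∈ B <;> simp [TermPts, Ecut, h1, h2, h3, h4]
  have dI2 : (Ecut s t (A ∩ B) (A \ B) ∪ Ecut s t (A ∩ B) (B \ A)) ∩
      Ecut s t (A ∩ B) (Aᶜ ∩ Bᶜ) = ∅ := by
    ext e; by_cases h1 : s e ∈ A <;> by_cases h2 : s e ∈ B <;> by_cases h3 : t e ∈ A <;> by_cases h4 : t e ∈ B <;> simp [TermPts, Ecut, h1, h2, h3, h4]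
  have nTA : (TermPts s t A).ncard = (Ecut s t (A ∩ B) (B \ A)).ncard +
      (Ecut s t (A ∩ B) (Aᶜ ∩ Bᶜ)).ncard +
      ((Ecut s t (A \ B) (B \ A)).ncard + (Ecut s t (A \ B) (Aᶜ ∩ Bᶜ)).ncard) := by
    rw [hTA, ncard_u2 dA3, ncard_u2 dA1, ncard_u2 dA2]
  have nTB : (TermPts s t B).ncard = (Ecut s t (A ∩ B) (A \ B)).ncard +
      (Ecut s t (A ∩ B) (Aᶜ ∩ Bᶜ)).ncard +
      ((Ecut s t (A \ B) (B \ A)).ncard + (Ecut s t (B \ A) (Aᶜ ∩ Bᶜ)).ncard) := by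
    rw [hTB, ncard_u2 dB3, ncard_u2 dB1, ncard_u2 dB2]
  have nTI : (TermPts s t (A ∩ B)).ncard = (Ecut s t (A ∩ B) (A \ B)).ncard +
      (Ecut s t (A ∩ B) (B \ A)).ncard + (Ecut s t (A ∩ B) (Aᶜ ∩ Bᶜ)).ncard := by
    rw [hTI, ncard_u2 dI2, ncard_u2 dI1]
  have hkA2 : (TermPts s t A).ncard = 2 := hkA
  have hkB2 : (TermPts s t B).ncard = 2 := hkB
  have pos12 : 0 < (Ecut s t (A ∩ B) (A \ B)).ncard := (Set.ncard_pos (Set.toFinite _)).2 hE12ne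
  have pos13 : 0 < (Ecut s t (A ∩ B) (B \ A)).ncard := (Set.ncard_pos (Set.toFinite _)).2 hE13ne
  have pos24 : 0 < (Ecut s t (A \ B) (Aᶜ ∩ Bᶜ)).ncard := (Set.ncard_pos (Set.toFinite _)).2 hE24ne
  have pos34 : 0 < (Ecut s t (B \ A) (Aᶜ ∩ Bᶜ)).ncard := (Set.ncard_pos (Set.toFinite _)).2 hE34ne
  have hconnI : ConnOn s t (A ∩ B) := by
    apply conn_of_cross_subsingleton hAco Set.inter_subset_left ⟨vi, hiA, hiB⟩
    rw [hdAI]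
    exact subsingleton_of_ncard_le_one (by omega)
  have hconnIc : ConnOn s t (A ∩ B)ᶜ := by
    rw [Set.compl_inter]
    exact conn_union_overlap hAcc hBcc ⟨v1, h1A, h1B⟩
  show IsTail s t (A ∩ B) ∧ kcut s t (A ∩ B) = 2 ∧ vi ∈ A ∩ B ∧ vj ∈ A ∩ B ∧ v1 ∉ A ∩ B
  refine ⟨⟨⟨⟨vi, hiA, hiB⟩, ?_⟩, hconnI, hconnIc⟩, ?_, ⟨hiA, hiB⟩, ⟨hjA, hjB⟩,
    fun h => h1A h.1⟩
  · intro h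
    exact h1A (show v1 ∈ A ∩ B by rw [h]; exact Set.mem_univ v1).1
  · show (TermPts s t (A ∩ B)).ncard = 2
    omega

lemma S2_inter_free {A B W0 : Set V}
    (hA : A ∈ S2set s t v1 vi vj ∧ W0 ⊂ A ∧ FreePair s t W0 A)
    (hB : B ∈ S2set s t v1 vi vj ∧ W0 ⊂ B ∧ FreePair s t W0 B) :
    A ∩ B ∈ S2set s t v1 vi vj ∧ W0 ⊂ A ∩ B ∧ FreePair s t W0 (A ∩ B) := by
  obtain ⟨hA1, hA2, hA3⟩ := hA
  obtain ⟨hB1, hB2, hB3⟩ := hB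
  have hI := S2_inter hA1 hB1
  have hfree : FreePair s t W0 (A ∩ B) := by
    rw [FreePair, Set.eq_empty_iff_forall_notMem]
    rintro e ⟨h0, hI'⟩
    rcases term_inter_subset A B hI' with h | h
    · have : e ∈ TermPts s t W0 ∩ TermPts s t A := ⟨h0, h⟩
      rw [hA3] at this; exact this
    · have : e ∈ TermPts s t W0 ∩ TermPts s t B := ⟨h0, h⟩
      rw [hB3] at this; exact this
  refine ⟨hI, ?_, hfree⟩
  rw [Set.ssubset_iff_subset_ne]
  refine ⟨Set.subset_inter hA2.subset hB2.subset, ?_⟩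
  intro heq
  have hk2 : (TermPts s t (A ∩ B)).ncard = 2 := hI.2.1
  obtain ⟨e, he⟩ : (TermPts s t (A ∩ B)).Nonempty :=
    Set.nonempty_of_ncard_ne_zero (by omega)
  rcases term_inter_subset A B he with h | h
  · have : e ∈ TermPts s t W0 ∩ TermPts s t A := ⟨by rw [heq]; exact he, h⟩
    rw [hA3] at this; exact this
  · have : e ∈ TermPts s t W0 ∩ TermPts s t B := ⟨by rw [heq]; exact he, h⟩
    rw [hB3] at this; exact this

lemma T2_mem_S2 {X : Set V} (hX : X ∈ T2set s t v1 vi vj) : X ∈ S2set s t v1 vi vj := by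
  obtain ⟨m, hne, rfl⟩ := hX
  exact sInter_closed (fun A B hA hB => S2_inter hA hB) (Set.toFinite _) hne
    (fun Y hY => Tlevel_subset s t _ m hY)

lemma cor42 {U : Set V} (hU : U ∈ S2set s t v1 vi vj) :
    ∃ X ∈ T2set s t v1 vi vj, TermPts s t X ∩ TermPts s t U ≠ ∅ ∧ X ⊆ U := by
  suffices H : ∀ n m, U ∈ Tlevel s t (S2set s t v1 vi vj) m →
      (U \ ⋂₀ Tlevel s t (S2set s t v1 vi vj) m).ncard = n →
      ∃ X ∈ T2set s t v1 vi vj, TermPts s t X ∩ TermPts s t U ≠ ∅ ∧ X ⊆ U by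
    exact H _ 0 hU rfl
  intro n
  induction n using Nat.strong_induction_on with
  | _ n ih =>
    intro m hm hn
    have hWmU : ⋂₀ Tlevel s t (S2set s t v1 vi vj) m ⊆ U := Set.sInter_subset_of_mem hm
    by_cases hfree : FreePair s t (⋂₀ Tlevel s t (S2set s t v1 vi vj) m) U
    · have hneq : ⋂₀ Tlevel s t (S2set s t v1 vi vj) m ≠ U := by
        intro h
        have h2 : (TermPts s t U).ncard = 2 := hU.2.1
        rw [FreePair, h, Set.inter_self] at hfree
        rw [hfree] at h2
        simp at h2
      have hmem : U ∈ Tlevel s t (S2set s t v1 vi vj) (m + 1) :=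
        ⟨hU, Set.ssubset_iff_subset_ne.mpr ⟨hWmU, hneq⟩, hfree⟩
      have hlev : (Tlevel s t (S2set s t v1 vi vj) (m + 1)).Nonempty := ⟨U, hmem⟩
      have hstep := sInter_closed
        (P := fun X => X ∈ S2set s t v1 vi vj ∧
          ⋂₀ Tlevel s t (S2set s t v1 vi vj) m ⊂ X ∧
          FreePair s t (⋂₀ Tlevel s t (S2set s t v1 vi vj) m) X)
        (fun A B hA hB => S2_inter_free hA hB) (Set.toFinite _) hlev (fun Y hY => hY)
      have hsub1 : ⋂₀ Tlevel s t (S2set s t v1 vi vj) (m + 1) ⊆ U :=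
        Set.sInter_subset_of_mem hmem
      have hlt : (U \ ⋂₀ Tlevel s t (S2set s t v1 vi vj) (m + 1)).ncard < n := by
        rw [← hn]
        apply Set.ncard_lt_ncard ?_ (Set.toFinite _)
        rw [Set.ssubset_iff_subset_ne]
        constructor
        · exact fun z hz => ⟨hz.1, fun hzm => hz.2 (hstep.2.1.subset hzm)⟩
        · obtain ⟨w, hw1, hw2⟩ := Set.exists_of_ssubset hstep.2.1
          intro heq
          have hwU : w ∈ U \ ⋂₀ Tlevel s t (S2set s t v1 vi vj) m := ⟨hsub1 hw1, hw2⟩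
          rw [← heq] at hwU
          exact hwU.2 hw1
      exact ih _ hlt (m + 1) hmem rfl
    · exact ⟨⋂₀ Tlevel s t (S2set s t v1 vi vj) m, ⟨m, ⟨U, hm⟩, rfl⟩, hfree, hWmU⟩


set_option maxHeartbeats 1600000 in
lemma S3_inter {A B : Set V} (hA : A ∈ S3set s t v1 vi vj) (hB : B ∈ S3set s t v1 vi vj) :
    A ∩ B ∈ S3set s t v1 vi vj := by
  have hA' : IsTail s t A ∧ kcut s t A = 3 ∧ vi ∈ A ∧ vj ∈ A ∧ v1 ∉ A ∧
      ∀ X ∈ T2set s t v1 vi vj, FreePair s t A X := hA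
  have hB' : IsTail s t B ∧ kcut s t B = 3 ∧ vi ∈ B ∧ vj ∈ B ∧ v1 ∉ B ∧
      ∀ X ∈ T2set s t v1 vi vj, FreePair s t B X := hB
  obtain ⟨⟨⟨hAne, hAuniv⟩, hAco, hAcc⟩, hkA, hiA, hjA, h1A, hAfree⟩ := hA'
  obtain ⟨⟨⟨hBne, hBuniv⟩, hBco, hBcc⟩, hkB, hiB, hjB, h1B, hBfree⟩ := hB'
  by_cases hab : A ⊆ B
  · rwa [Set.inter_eq_left.mpr hab]
  by_cases hba : B ⊆ A
  · rwa [Set.inter_eq_right.mpr hba]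
  obtain ⟨x2, hx2A, hx2B⟩ := Set.not_subset.mp hab
  obtain ⟨x3, hx3B, hx3A⟩ := Set.not_subset.mp hba
  have hdAI : A \ (A ∩ B) = A \ B := by ext x; simp; try tauto
  have hdBI : B \ (A ∩ B) = B \ A := by ext x; simp; try tauto
  have hdAc : Aᶜ \ (B \ A) = Aᶜ ∩ Bᶜ := by ext x; simp; try tauto
  have hdBc : Bᶜ \ (A \ B) = Aᶜ ∩ Bᶜ := by ext x; simp; try tauto
  have hdUc : Aᶜ \ (Aᶜ ∩ Bᶜ) = B \ A := by ext x; simp; try tauto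
  have hE12ne : (Ecut s t (A ∩ B) (A \ B)).Nonempty := by
    have h := cross_nonempty (P := A ∩ B) hAco hiA ⟨hiA, hiB⟩ hx2A (fun h => hx2B h.2)
    rwa [hdAI] at h
  have hE13ne : (Ecut s t (A ∩ B) (B \ A)).Nonempty := by
    have h := cross_nonempty (P := A ∩ B) hBco hiB ⟨hiA, hiB⟩ hx3B (fun h => hx3A h.1)
    rwa [hdBI] at h
  have hE34ne : (Ecut s t (B \ A) (Aᶜ ∩ Bᶜ)).Nonempty := by
    have h := cross_nonempty (P := B \ A) hAcc hx3A ⟨hx3B, hx3A⟩ h1A (fun h => h1B h.1)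
    rwa [hdAc] at h
  have hE24ne : (Ecut s t (A \ B) (Aᶜ ∩ Bᶜ)).Nonempty := by
    have h := cross_nonempty (P := A \ B) hBcc hx2B ⟨hx2A, hx2B⟩ h1B (fun h => h1A h.1)
    rwa [hdBc] at h
  have hTA : TermPts s t A = (Ecut s t (A ∩ B) (B \ A) ∪ Ecut s t (A ∩ B) (Aᶜ ∩ Bᶜ)) ∪
      (Ecut s t (A \ B) (B \ A) ∪ Ecut s t (A \ B) (Aᶜ ∩ Bᶜ)) := by
    ext e; by_cases h1 : s e ∈ A <;> by_cases h2 : s e ∈ B <;> by_cases h3 : t e ∈ A <;> by_cases h4 : t e ∈ B <;> simp [TermPts, Ecut, h1, h2, h3, h4]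
  have hTB : TermPts s t B = (Ecut s t (A ∩ B) (A \ B) ∪ Ecut s t (A ∩ B) (Aᶜ ∩ Bᶜ)) ∪
      (Ecut s t (A \ B) (B \ A) ∪ Ecut s t (B \ A) (Aᶜ ∩ Bᶜ)) := by
    ext e; by_cases h1 : s e ∈ A <;> by_cases h2 : s e ∈ B <;> by_cases h3 : t e ∈ A <;> by_cases h4 : t e ∈ B <;> simp [TermPts, Ecut, h1, h2, h3, h4]
  have hTI : TermPts s t (A ∩ B) = (Ecut s t (A ∩ B) (A \ B) ∪ Ecut s t (A ∩ B) (B \ A)) ∪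
      Ecut s t (A ∩ B) (Aᶜ ∩ Bᶜ) := by
    ext e; by_cases h1 : s e ∈ A <;> by_cases h2 : s e ∈ B <;> by_cases h3 : t e ∈ A <;> by_cases h4 : t e ∈ B <;> simp [TermPts, Ecut, h1, h2, h3, h4]
  have hTU : TermPts s t (A ∪ B) = (Ecut s t (A ∩ B) (Aᶜ ∩ Bᶜ) ∪ Ecut s t (A \ B) (Aᶜ ∩ Bᶜ)) ∪
      Ecut s t (B \ A) (Aᶜ ∩ Bᶜ) := by
    ext e; by_cases h1 : s e ∈ A <;> by_cases h2 : s e ∈ B <;> by_cases h3 : t e ∈ A <;> by_cases h4 : t e ∈ B <;> simp [TermPts, Ecut, h1, h2, h3, h4]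
  have dA1 : Ecut s t (A ∩ B) (B \ A) ∩ Ecut s t (A ∩ B) (Aᶜ ∩ Bᶜ) = ∅ := by
    ext e; by_cases h1 : s e ∈ A <;> by_cases h2 : s e ∈ B <;> by_cases h3 : t e ∈ A <;> by_cases h4 : t e ∈ B <;> simp [TermPts, Ecut, h1, h2, h3, h4]
  have dA2 : Ecut s t (A \ B) (B \ A) ∩ Ecut s t (A \ B) (Aᶜ ∩ Bᶜ) = ∅ := by
    ext e; by_cases h1 : s e ∈ A <;> by_cases h2 : s e ∈ B <;> by_cases h3 : t e ∈ A <;> by_cases h4 : t e ∈ B <;> simp [TermPts, Ecut, h1, h2, h3, h4]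
  have dA3 : (Ecut s t (A ∩ B) (B \ A) ∪ Ecut s t (A ∩ B) (Aᶜ ∩ Bᶜ)) ∩
      (Ecut s t (A \ B) (B \ A) ∪ Ecut s t (A \ B) (Aᶜ ∩ Bᶜ)) = ∅ := by
    ext e; by_cases h1 : s e ∈ A <;> by_cases h2 : s e ∈ B <;> by_cases h3 : t e ∈ A <;> by_cases h4 : t e ∈ B <;> simp [TermPts, Ecut, h1, h2, h3, h4]
  have dB1 : Ecut s t (A ∩ B) (A \ B) ∩ Ecut s t (A ∩ B) (Aᶜ ∩ Bᶜ) = ∅ := by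
    ext e; by_cases h1 : s e ∈ A <;> by_cases h2 : s e ∈ B <;> by_cases h3 : t e ∈ A <;> by_cases h4 : t e ∈ B <;> simp [TermPts, Ecut, h1, h2, h3, h4]
  have dB2 : Ecut s t (A \ B) (B \ A) ∩ Ecut s t (B \ A) (Aᶜ ∩ Bᶜ) = ∅ := by
    ext e; by_cases h1 : s e ∈ A <;> by_cases h2 : s e ∈ B <;> by_cases h3 : t e ∈ A <;> by_cases h4 : t e ∈ B <;> simp [TermPts, Ecut, h1, h2, h3, h4]
  have dB3 : (Ecut s t (A ∩ B) (A \ B) ∪ Ecut s t (A ∩ B) (Aᶜ ∩ Bᶜ)) ∩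
      (Ecut s t (A \ B) (B \ A) ∪ Ecut s t (B \ A) (Aᶜ ∩ Bᶜ)) = ∅ := by
    ext e; by_cases h1 : s e ∈ A <;> by_cases h2 : s e ∈ B <;> by_cases h3 : t e ∈ A <;> by_cases h4 : t e ∈ B <;> simp [TermPts, Ecut, h1, h2, h3, h4]
  have dI1 : Ecut s t (A ∩ B) (A \ B) ∩ Ecut s t (A ∩ B) (B \ A) = ∅ := by
    ext e; by_cases h1 : s e ∈ A <;> by_cases h2 : s e ∈ B <;> by_cases h3 : t e ∈ A <;> by_cases h4 : t e ∈ B <;> simp [TermPts, Ecut, h1, h2, h3, h4]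
  have dI2 : (Ecut s t (A ∩ B) (A \ B) ∪ Ecut s t (A ∩ B) (B \ A)) ∩
      Ecut s t (A ∩ B) (Aᶜ ∩ Bᶜ) = ∅ := by
    ext e; by_cases h1 : s e ∈ A <;> by_cases h2 : s e ∈ B <;> by_cases h3 : t e ∈ A <;> by_cases h4 : t e ∈ B <;> simp [TermPts, Ecut, h1, h2, h3, h4]
  have dU1 : Ecut s t (A ∩ B) (Aᶜ ∩ Bᶜ) ∩ Ecut s t (A \ B) (Aᶜ ∩ Bᶜ) = ∅ := by
    ext e; by_cases h1 : s e ∈ A <;> by_cases h2 : s e ∈ B <;> by_cases h3 : t e ∈ A <;> by_cases h4 : t e ∈ B <;> simp [TermPts, Ecut, h1, h2, h3, h4]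
  have dU2 : (Ecut s t (A ∩ B) (Aᶜ ∩ Bᶜ) ∪ Ecut s t (A \ B) (Aᶜ ∩ Bᶜ)) ∩
      Ecut s t (B \ A) (Aᶜ ∩ Bᶜ) = ∅ := by
    ext e; by_cases h1 : s e ∈ A <;> by_cases h2 : s e ∈ B <;> by_cases h3 : t e ∈ A <;> by_cases h4 : t e ∈ B <;> simp [TermPts, Ecut, h1, h2, h3, h4]
  have hcomm : Ecut s t (Aᶜ ∩ Bᶜ) (B \ A) = Ecut s t (B \ A) (Aᶜ ∩ Bᶜ) := by
    ext e; by_cases h1 : s e ∈ A <;> by_cases h2 : s e ∈ B <;> by_cases h3 : t e ∈ A <;> by_cases h4 : t e ∈ B <;> simp [TermPts, Ecut, h1, h2, h3, h4]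
  have nTA : (TermPts s t A).ncard = (Ecut s t (A ∩ B) (B \ A)).ncard +
      (Ecut s t (A ∩ B) (Aᶜ ∩ Bᶜ)).ncard +
      ((Ecut s t (A \ B) (B \ A)).ncard + (Ecut s t (A \ B) (Aᶜ ∩ Bᶜ)).ncard) := by
    rw [hTA, ncard_u2 dA3, ncard_u2 dA1, ncard_u2 dA2]
  have nTB : (TermPts s t B).ncard = (Ecut s t (A ∩ B) (A \ B)).ncard +
      (Ecut s t (A ∩ B) (Aᶜ ∩ Bᶜ)).ncard +
      ((Ecut s t (A \ B) (B \ A)).ncard + (Ecut s t (B \ A) (Aᶜ ∩ Bᶜ)).ncard) := by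
    rw [hTB, ncard_u2 dB3, ncard_u2 dB1, ncard_u2 dB2]
  have nTI : (TermPts s t (A ∩ B)).ncard = (Ecut s t (A ∩ B) (A \ B)).ncard +
      (Ecut s t (A ∩ B) (B \ A)).ncard + (Ecut s t (A ∩ B) (Aᶜ ∩ Bᶜ)).ncard := by
    rw [hTI, ncard_u2 dI2, ncard_u2 dI1]
  have nTU : (TermPts s t (A ∪ B)).ncard = (Ecut s t (A ∩ B) (Aᶜ ∩ Bᶜ)).ncard +
      (Ecut s t (A \ B) (Aᶜ ∩ Bᶜ)).ncard + (Ecut s t (B \ A) (Aᶜ ∩ Bᶜ)).ncard := by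
    rw [hTU, ncard_u2 dU2, ncard_u2 dU1]
  have hkA3 : (TermPts s t A).ncard = 3 := hkA
  have hkB3 : (TermPts s t B).ncard = 3 := hkB
  have pos12 : 0 < (Ecut s t (A ∩ B) (A \ B)).ncard := (Set.ncard_pos (Set.toFinite _)).2 hE12ne
  have pos13 : 0 < (Ecut s t (A ∩ B) (B \ A)).ncard := (Set.ncard_pos (Set.toFinite _)).2 hE13ne
  have pos24 : 0 < (Ecut s t (A \ B) (Aᶜ ∩ Bᶜ)).ncard := (Set.ncard_pos (Set.toFinite _)).2 hE24ne
  have pos34 : 0 < (Ecut s t (B \ A) (Aᶜ ∩ Bᶜ)).ncard := (Set.ncard_pos (Set.toFinite _)).2 hE34ne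
  have hIne2 : (TermPts s t (A ∩ B)).ncard ≠ 2 := by
    intro hI2
    have hconnI : ConnOn s t (A ∩ B) := by
      apply conn_of_cross_subsingleton hAco Set.inter_subset_left ⟨vi, hiA, hiB⟩
      rw [hdAI]
      exact subsingleton_of_ncard_le_one (by omega)
    have hmemS2 : A ∩ B ∈ S2set s t v1 vi vj := by
      show IsTail s t (A ∩ B) ∧ kcut s t (A ∩ B) = 2 ∧ vi ∈ A ∩ B ∧ vj ∈ A ∩ B ∧ v1 ∉ A ∩ B
      refine ⟨⟨⟨⟨vi, hiA, hiB⟩, ?_⟩, hconnI, ?_⟩, hI2, ⟨hiA, hiB⟩, ⟨hjA, hjB⟩, fun h => h1A h.1⟩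
      · intro h; exact h1A (show v1 ∈ A ∩ B by rw [h]; exact Set.mem_univ v1).1
      · rw [Set.compl_inter]; exact conn_union_overlap hAcc hBcc ⟨v1, h1A, h1B⟩
    obtain ⟨X, hXT2, hXterm, _⟩ := cor42 hmemS2
    obtain ⟨e, heX, heI⟩ := Set.nonempty_iff_ne_empty.mpr hXterm
    rcases term_inter_subset A B heI with h | h
    · have hmem : e ∈ TermPts s t A ∩ TermPts s t X := ⟨h, heX⟩
      rw [hAfree X hXT2] at hmem; exact hmem
    · have hmem : e ∈ TermPts s t B ∩ TermPts s t X := ⟨h, heX⟩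
      rw [hBfree X hXT2] at hmem; exact hmem
  have hUne2 : (TermPts s t (A ∪ B)).ncard ≠ 2 := by
    intro hU2
    have hconnUc : ConnOn s t (A ∪ B)ᶜ := by
      rw [Set.compl_union]
      apply conn_of_cross_subsingleton hAcc Set.inter_subset_left ⟨v1, h1A, h1B⟩
      rw [hdUc, hcomm]
      exact subsingleton_of_ncard_le_one (by omega)
    have hmemS2 : A ∪ B ∈ S2set s t v1 vi vj := by
      show IsTail s t (A ∪ B) ∧ kcut s t (A ∪ B) = 2 ∧ vi ∈ A ∪ B ∧ vj ∈ A ∪ B ∧ v1 ∉ A ∪ B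
      refine ⟨⟨⟨⟨vi, Or.inl hiA⟩, ?_⟩, conn_union_overlap hAco hBco ⟨vi, hiA, hiB⟩, hconnUc⟩,
        hU2, Or.inl hiA, Or.inl hjA, fun h => h.elim h1A h1B⟩
      · intro h
        have hv : v1 ∈ A ∪ B := by rw [h]; exact Set.mem_univ v1
        exact hv.elim h1A h1B
    obtain ⟨X, hXT2, hXterm, _⟩ := cor42 hmemS2
    obtain ⟨e, heX, heU⟩ := Set.nonempty_iff_ne_empty.mpr hXterm
    rcases term_union_subset A B heU with h | h
    · have hmem : e ∈ TermPts s t A ∩ TermPts s t X := ⟨h, heX⟩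
      rw [hAfree X hXT2] at hmem; exact hmem
    · have hmem : e ∈ TermPts s t B ∩ TermPts s t X := ⟨h, heX⟩
      rw [hBfree X hXT2] at hmem; exact hmem
  have hkI3 : (TermPts s t (A ∩ B)).ncard = 3 := by omega
  have hab1 : (Ecut s t (A ∩ B) (A \ B)).ncard = 1 ∨ (Ecut s t (A ∩ B) (B \ A)).ncard = 1 := by
    omega
  have hconnI : ConnOn s t (A ∩ B) := by
    rcases hab1 with h | h
    · apply conn_of_cross_subsingleton hAco Set.inter_subset_left ⟨vi, hiA, hiB⟩
      rw [hdAI]; exact subsingleton_of_ncard_le_one (by omega)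
    · apply conn_of_cross_subsingleton hBco Set.inter_subset_right ⟨vi, hiA, hiB⟩
      rw [hdBI]; exact subsingleton_of_ncard_le_one (by omega)
  show IsTail s t (A ∩ B) ∧ kcut s t (A ∩ B) = 3 ∧ vi ∈ A ∩ B ∧ vj ∈ A ∩ B ∧ v1 ∉ A ∩ B ∧
    ∀ X ∈ T2set s t v1 vi vj, FreePair s t (A ∩ B) X
  refine ⟨⟨⟨⟨vi, hiA, hiB⟩, ?_⟩, hconnI, ?_⟩, hkI3, ⟨hiA, hiB⟩, ⟨hjA, hjB⟩,
    fun h => h1A h.1, ?_⟩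
  · intro h; exact h1A (show v1 ∈ A ∩ B by rw [h]; exact Set.mem_univ v1).1
  · rw [Set.compl_inter]; exact conn_union_overlap hAcc hBcc ⟨v1, h1A, h1B⟩
  · intro X hXT2
    rw [FreePair, Set.eq_empty_iff_forall_notMem]
    rintro e ⟨heI, heX⟩
    rcases term_inter_subset A B heI with h | h
    · have hmem : e ∈ TermPts s t A ∩ TermPts s t X := ⟨h, heX⟩
      rw [hAfree X hXT2] at hmem; exact hmem
    · have hmem : e ∈ TermPts s t B ∩ TermPts s t X := ⟨h, heX⟩
      rw [hBfree X hXT2] at hmem; exact hmem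

lemma T3_mem_S3 {X : Set V} (hX : X ∈ T3set s t v1 vi vj) : X ∈ S3set s t v1 vi vj := by
  obtain ⟨m, hne, rfl⟩ := hX
  exact sInter_closed (fun A B hA hB => S3_inter hA hB) (Set.toFinite _) hne
    (fun Y hY => Tlevel_subset s t _ m hY)

end Aux2



set_option maxHeartbeats 3000000 in
/-- Lemma 5.6: let `Z` be a `T²_{i,j}`-normalized 3-tail with
`C_i ∪ C_j ∪ C_1 ⊆ Zᶜ`, and `W` a `Z`-terminal tail of `T³_{i,j}` contained
in `Zᶜ` with `#(Term_Z ∩ Term_W) = 2`. Then `Z ∪ W` is a 2-tail containing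
`v_i, v_j` and omitting `v_1`, and there is a `Z`-terminal tail
`W' ∈ T²_{i,j}` with `Z ⊆ W'`. -/
theorem stmt_19 {V E : Type} [Fintype V] [Fintype E] (s t : E → V)
    (hC : ConnOn s t Set.univ) (v1 vi vj : V) (Z W : Set V)
    (hZ : IsTail s t Z) (hkZ : kcut s t Z = 3)
    (hnorm : T2Normalized s t v1 vi vj Z)
    (hi : vi ∈ Zᶜ) (hj : vj ∈ Zᶜ) (h1 : v1 ∈ Zᶜ)
    (hW : W ∈ T3set s t v1 vi vj)
    (hWterm : TermPts s t W ∩ TermPts s t Z ≠ ∅)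
    (hWc : W ⊆ Zᶜ)
    (hcard : (TermPts s t Z ∩ TermPts s t W).ncard = 2) :
    (IsTail s t (Z ∪ W) ∧ kcut s t (Z ∪ W) = 2 ∧
      vi ∈ Z ∪ W ∧ vj ∈ Z ∪ W ∧ v1 ∉ Z ∪ W) ∧
    ∃ W' ∈ T2set s t v1 vi vj,
      TermPts s t W' ∩ TermPts s t Z ≠ ∅ ∧ Z ⊆ W' := by
  have hWS3' : IsTail s t W ∧ kcut s t W = 3 ∧ vi ∈ W ∧ vj ∈ W ∧ v1 ∉ W ∧
      ∀ X ∈ T2set s t v1 vi vj, FreePair s t W X := T3_mem_S3 hW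
  obtain ⟨⟨⟨hWne, hWuniv⟩, hWco, hWcc⟩, hkW, hiW, hjW, h1W, hWfree⟩ := hWS3'
  obtain ⟨⟨hZne, hZuniv⟩, hZco, hZcc⟩ := hZ
  have hdisj : ∀ x, x ∈ W → x ∉ Z := fun x hx => hWc hx
  have hkW3 : (TermPts s t W).ncard = 3 := hkW
  have hkZ3 : (TermPts s t Z).ncard = 3 := hkZ
  have hTU : TermPts s t (Z ∪ W) =
      (TermPts s t Z \ TermPts s t W) ∪ (TermPts s t W \ TermPts s t Z) := by
    ext e
    have hds : s e ∈ W → s e ∉ Z := hdisj _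
    have hdt : t e ∈ W → t e ∉ Z := hdisj _
    simp [TermPts]
    tauto
  have hZsplit : TermPts s t Z =
      (TermPts s t Z \ TermPts s t W) ∪ (TermPts s t Z ∩ TermPts s t W) :=
    (Set.diff_union_inter _ _).symm
  have hWsplit : TermPts s t W =
      (TermPts s t W \ TermPts s t Z) ∪ (TermPts s t Z ∩ TermPts s t W) := by
    rw [Set.inter_comm]
    exact (Set.diff_union_inter _ _).symm
  have dZ : (TermPts s t Z \ TermPts s t W) ∩ (TermPts s t Z ∩ TermPts s t W) = ∅ := by
    rw [Set.eq_empty_iff_forall_notMem]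
    rintro e ⟨⟨he1, he2⟩, he3, he4⟩
    exact he2 he4
  have dW : (TermPts s t W \ TermPts s t Z) ∩ (TermPts s t Z ∩ TermPts s t W) = ∅ := by
    rw [Set.eq_empty_iff_forall_notMem]
    rintro e ⟨⟨he1, he2⟩, he3, he4⟩
    exact he2 he3
  have dU : (TermPts s t Z \ TermPts s t W) ∩ (TermPts s t W \ TermPts s t Z) = ∅ := by
    rw [Set.eq_empty_iff_forall_notMem]
    rintro e ⟨⟨he1, he2⟩, he3, he4⟩
    exact he2 he3
  have nZ : (TermPts s t Z).ncard =
      (TermPts s t Z \ TermPts s t W).ncard + (TermPts s t Z ∩ TermPts s t W).ncard := by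
    conv_lhs => rw [hZsplit]
    rw [ncard_u2 dZ]
  have nW : (TermPts s t W).ncard =
      (TermPts s t W \ TermPts s t Z).ncard + (TermPts s t Z ∩ TermPts s t W).ncard := by
    conv_lhs => rw [hWsplit]
    rw [ncard_u2 dW]
  have nU : (TermPts s t (Z ∪ W)).ncard =
      (TermPts s t Z \ TermPts s t W).ncard + (TermPts s t W \ TermPts s t Z).ncard := by
    rw [hTU, ncard_u2 dU]
  have hcard' : (TermPts s t Z ∩ TermPts s t W).ncard = 2 := hcard
  have hkU2 : (TermPts s t (Z ∪ W)).ncard = 2 := by omega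
  obtain ⟨e0, he0W, he0Z⟩ := Set.nonempty_iff_ne_empty.mpr hWterm
  have he0W2 : (s e0 ∈ W ∧ t e0 ∉ W) ∨ (t e0 ∈ W ∧ s e0 ∉ W) := he0W
  have he0Z2 : (s e0 ∈ Z ∧ t e0 ∉ Z) ∨ (t e0 ∈ Z ∧ s e0 ∉ Z) := he0Z
  have hbridge : ConnOn s t (Z ∪ W) := by
    rcases he0W2 with ⟨hsW, htW⟩ | ⟨htW, hsW⟩ <;> rcases he0Z2 with ⟨hsZ, htZ⟩ | ⟨htZ, hsZ⟩
    · exact absurd hsZ (hdisj _ hsW)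
    · exact conn_union_bridge hZco hWco htZ hsW (Or.inr ⟨rfl, rfl⟩)
    · exact conn_union_bridge hZco hWco hsZ htW (Or.inl ⟨rfl, rfl⟩)
    · exact absurd htZ (hdisj _ htW)
  have hXsub : (Z ∪ W)ᶜ ⊆ Wᶜ := fun x hx h => hx (Or.inr h)
  have hXne : v1 ∈ (Z ∪ W)ᶜ := fun h => h.elim h1 h1W
  have hWdiff : Wᶜ \ (Z ∪ W)ᶜ = Z := by
    ext x
    have h5 : x ∈ Z → x ∉ W := fun hz hw => hdisj x hw hz
    simp
    tauto
  have hcrossU : Ecut s t ((Z ∪ W)ᶜ) (Wᶜ \ (Z ∪ W)ᶜ) = TermPts s t Z \ TermPts s t W := by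
    rw [hWdiff]
    ext e
    have hds : s e ∈ W → s e ∉ Z := hdisj _
    have hdt : t e ∈ W → t e ∉ Z := hdisj _
    simp [Ecut, TermPts]
    tauto
  have hconnX : ConnOn s t (Z ∪ W)ᶜ := by
    apply conn_of_cross_subsingleton hWcc hXsub ⟨v1, hXne⟩
    rw [hcrossU]
    exact subsingleton_of_ncard_le_one (by omega)
  have hUmem : (Z ∪ W) ∈ S2set s t v1 vi vj := by
    show IsTail s t (Z ∪ W) ∧ kcut s t (Z ∪ W) = 2 ∧ vi ∈ Z ∪ W ∧ vj ∈ Z ∪ W ∧ v1 ∉ Z ∪ W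
    refine ⟨⟨⟨⟨vi, Or.inr hiW⟩, ?_⟩, hbridge, hconnX⟩, hkU2, Or.inr hiW, Or.inr hjW,
      fun h => h.elim h1 h1W⟩
    intro h
    have hv : v1 ∈ Z ∪ W := by rw [h]; exact Set.mem_univ v1
    exact hv.elim h1 h1W
  obtain ⟨W2, hW2T2, hW2term, hW2sub⟩ := cor42 hUmem
  obtain ⟨e, heW2, heU⟩ := Set.nonempty_iff_ne_empty.mpr hW2term
  have hfreeWW2 : TermPts s t W ∩ TermPts s t W2 = ∅ := hWfree W2 hW2T2
  have heNotW : e ∉ TermPts s t W := by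
    intro h
    rw [Set.eq_empty_iff_forall_notMem] at hfreeWW2
    exact hfreeWW2 e ⟨h, heW2⟩
  have heZ : e ∈ TermPts s t Z := by
    rcases term_union_subset Z W heU with h | h
    · exact h
    · exact absurd h heNotW
  have hterm : TermPts s t W2 ∩ TermPts s t Z ≠ ∅ := by
    rw [← Set.nonempty_iff_ne_empty]
    exact ⟨e, heW2, heZ⟩
  have hperf := hnorm W2 hW2T2 hterm
  have hW2S2 : IsTail s t W2 ∧ kcut s t W2 = 2 ∧ vi ∈ W2 ∧ vj ∈ W2 ∧ v1 ∉ W2 :=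
    T2_mem_S2 hW2T2
  refine ⟨hUmem, W2, hW2T2, hterm, ?_⟩
  rcases hperf with h | h | h | h
  · exact h
  · exact absurd (h hW2S2.2.2.1) hi
  · exfalso
    have hZcW : Zᶜ ⊆ W := fun x hx => (hW2sub (h hx)).elim (fun hz => absurd hz hx) id
    have hWeq : W = Zᶜ := Set.Subset.antisymm hWc hZcW
    have heq2 : TermPts s t Z ∩ TermPts s t W = TermPts s t Z := by
      rw [hWeq, term_compl, Set.inter_self]
    rw [heq2] at hcard'
    omega
  · exfalso
    have hW2W : W2 ⊆ W := fun x hx => (hW2sub hx).elim (fun hz => absurd hz (h hx)) id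
    have heW22 : (s e ∈ W2 ∧ t e ∉ W2) ∨ (t e ∈ W2 ∧ s e ∉ W2) := heW2
    have heZ2 : (s e ∈ Z ∧ t e ∉ Z) ∨ (t e ∈ Z ∧ s e ∉ Z) := heZ
    rcases heW22 with ⟨hsW2, htW2⟩ | ⟨htW2, hsW2⟩ <;>
      rcases heZ2 with ⟨hsZ, htZ⟩ | ⟨htZ, hsZ⟩
    · exact (hdisj _ (hW2W hsW2)) hsZ
    · exact heNotW (show e ∈ TermPts s t W from
        Or.inl ⟨hW2W hsW2, fun htWm => hdisj _ htWm htZ⟩)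
    · exact heNotW (show e ∈ TermPts s t W from
        Or.inr ⟨hW2W htW2, fun hsWm => hdisj _ hsWm hsZ⟩)
    · exact (hdisj _ (hW2W htW2)) htZ
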